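/- arXiv:1401.0189 — 2 statements merged into one kernel-verified Lean document; each statement's English description precedes it below -/
import Mathlib

section
/- Let ε ∈ (0,1/2). The set of nonzero partial derivatives of NW_{n,ε} with respect to admissible sets is a downward-closed set of multilinear monomials: if m is the (nonzero) partial derivative of NW_{n,ε} with respect to some admissible set D, and m′ is a multilinear monomial whose set of variables is contained in the set of variables of m, then there exists an admissible set D′ such that m′ is the partial derivative of NW_{n,ε} with respect to D′. -/
open MvPolynomial

noncomputable section

/-- Evaluation at `i` of the univariate polynomial with coefficient vector `a`. -/
def polyEval {Fn : Type*} [CommRing Fn] {d : ℕ} (a : Fin d → Fn) (i : Fn) : Fn :=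
  ∑ k : Fin d, a k * i ^ (k : ℕ)

/-- The Nisan–Wigderson polynomial over the coefficient field `K`. -/
def NW (Fn : Type*) [CommRing Fn] [Fintype Fn] (K : Type*) [CommSemiring K] (d : ℕ) :
    MvPolynomial (Fn × Fn) K :=
  ∑ a : Fin d → Fn, ∏ i : Fn, X (i, polyEval a i)

/-- Iterated partial derivative with respect to a finite set of variables. -/
def pderivFinset {σ : Type*} {K : Type*} [CommSemiring K] (D : Finset σ)
    (f : MvPolynomial σ K) : MvPolynomial σ K :=
  D.toList.foldr (fun v g => pderiv v g) f

section Aux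

variable {σ : Type*} [DecidableEq σ] {K : Type*} [CommSemiring K]

lemma prod_X_eq_monomial (W : Finset σ) :
    (∏ v ∈ W, X v : MvPolynomial σ K) = monomial (∑ v ∈ W, Finsupp.single v 1) 1 := by
  induction W using Finset.induction with
  | empty => simp
  | insert _ _ h ih =>
      rw [Finset.prod_insert h, Finset.sum_insert h, ih, X, monomial_mul, one_mul]

lemma exp_apply (W : Finset σ) (v : σ) :
    (∑ w ∈ W, Finsupp.single w 1 : σ →₀ ℕ) v = if v ∈ W then 1 else 0 := by
  rw [Finset.sum_apply']
  simp [Finsupp.single_apply]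

lemma prod_X_inj [Nontrivial K] (W1 W2 : Finset σ)
    (h : (∏ v ∈ W1, X v : MvPolynomial σ K) = ∏ v ∈ W2, X v) : W1 = W2 := by
  classical
  rw [prod_X_eq_monomial, prod_X_eq_monomial] at h
  have he : (∑ v ∈ W1, Finsupp.single v 1 : σ →₀ ℕ) = ∑ v ∈ W2, Finsupp.single v 1 := by
    have h2 := congrArg MvPolynomial.support h
    rw [support_monomial, support_monomial, if_neg (one_ne_zero (α := K)),
      if_neg (one_ne_zero (α := K))] at h2
    exact Finset.singleton_injective h2
  ext v
  have := DFunLike.congr_fun he v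
  rw [exp_apply, exp_apply] at this
  by_cases h1 : v ∈ W1 <;> by_cases h2 : v ∈ W2 <;> simp [h1, h2] at this ⊢

lemma pderiv_prod_X (v : σ) (W : Finset σ) :
    pderiv v (∏ w ∈ W, X w : MvPolynomial σ K) =
      if v ∈ W then ∏ w ∈ W.erase v, X w else 0 := by
  rw [prod_X_eq_monomial, pderiv_monomial, exp_apply]
  by_cases hv : v ∈ W
  · rw [if_pos hv, if_pos hv, prod_X_eq_monomial, Nat.cast_one, mul_one]
    congr 1
    have h : (∑ w ∈ W, Finsupp.single w 1 : σ →₀ ℕ)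
        = Finsupp.single v 1 + ∑ w ∈ W.erase v, Finsupp.single w 1 := by
      conv_lhs => rw [← Finset.insert_erase hv]
      rw [Finset.sum_insert (Finset.notMem_erase v W)]
    rw [h, add_tsub_cancel_left]
  · rw [if_neg hv, if_neg hv, Nat.cast_zero, mul_zero, monomial_zero]

lemma foldr_pderiv_prod_X (L : List σ) (hL : L.Nodup) (W : Finset σ) :
    L.foldr (fun v g => pderiv v g) (∏ w ∈ W, X w : MvPolynomial σ K) =
      if L.toFinset ⊆ W then ∏ w ∈ W \ L.toFinset, X w else 0 := by
  induction L with
  | nil => simp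
  | cons v L ih =>
      have hn : L.Nodup := (List.nodup_cons.mp hL).2
      have hv : v ∉ L := (List.nodup_cons.mp hL).1
      simp only [List.foldr_cons, ih hn, List.toFinset_cons]
      by_cases hL' : L.toFinset ⊆ W
      · rw [if_pos hL', pderiv_prod_X]
        by_cases hvW : v ∈ W
        · have hvW' : v ∈ W \ L.toFinset :=
            Finset.mem_sdiff.mpr ⟨hvW, by simp [hv]⟩
          rw [if_pos hvW', if_pos (Finset.insert_subset hvW hL')]
          congr 1
          ext w
          simp only [Finset.mem_erase, Finset.mem_sdiff, Finset.mem_insert, List.mem_toFinset]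
          tauto
        · rw [if_neg (fun h => hvW (Finset.mem_sdiff.mp h).1),
            if_neg (fun h => hvW (h (Finset.mem_insert_self v _)))]
      · rw [if_neg hL', map_zero,
          if_neg (fun h => hL' (fun x hx => h (Finset.mem_insert_of_mem hx)))]

lemma pderivFinset_prod_X (D W : Finset σ) :
    pderivFinset D (∏ w ∈ W, X w : MvPolynomial σ K) =
      if D ⊆ W then ∏ w ∈ W \ D, X w else 0 := by
  unfold pderivFinset
  rw [foldr_pderiv_prod_X _ (Finset.nodup_toList D), Finset.toList_toFinset]

omit [DecidableEq σ] in
lemma pderivFinset_sum {ι : Type*} (D : Finset σ) (s : Finset ι)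
    (f : ι → MvPolynomial σ K) :
    pderivFinset D (∑ i ∈ s, f i) = ∑ i ∈ s, pderivFinset D (f i) := by
  unfold pderivFinset
  generalize D.toList = L
  induction L with
  | nil => simp
  | cons v L ih => simp [List.foldr_cons, ih, map_sum]

lemma polyEval_injOn {Fn : Type*} [Field Fn] {d : ℕ} (a b : Fin d → Fn) (s : Finset Fn)
    (hcard : d ≤ s.card) (h : ∀ x ∈ s, polyEval a x = polyEval b x) : a = b := by
  rcases Nat.eq_zero_or_pos d with hd | hd
  · subst hd; funext k; exact k.elim0
  set p : Polynomial Fn := ∑ k : Fin d, Polynomial.monomial (k : ℕ) (a k - b k) with hp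
  have heval : ∀ x ∈ s, p.eval x = 0 := by
    intro x hx
    have hx' := h x hx
    rw [hp, Polynomial.eval_finset_sum]
    simp only [Polynomial.eval_monomial, sub_mul]
    rw [Finset.sum_sub_distrib]
    rw [polyEval, polyEval] at hx'
    rw [hx', sub_self]
  have hdeg : p.natDegree < d := by
    have : p.natDegree ≤ d - 1 := by
      apply Polynomial.natDegree_sum_le_of_forall_le
      intro k _
      exact (Polynomial.natDegree_monomial_le _).trans (Nat.le_sub_one_of_lt k.2)
    omega
  have hp0 : p = 0 :=
    Polynomial.eq_zero_of_natDegree_lt_card_of_eval_eq_zero' p s heval (hdeg.trans_le hcard)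
  funext k
  have hc : p.coeff (k : ℕ) = a k - b k := by
    rw [hp, Polynomial.finset_sum_coeff]
    simp only [Polynomial.coeff_monomial]
    rw [Finset.sum_eq_single k]
    · simp
    · intro j _ hj
      rw [if_neg (fun hjk => hj (Fin.val_injective hjk))]
    · intro hk; exact absurd (Finset.mem_univ k) hk
  rw [hp0, Polynomial.coeff_zero] at hc
  have := hc.symm
  rwa [sub_eq_zero] at this

end Aux

/-- Downward closedness of the nonzero partial derivatives of `NW_{n,ε}` (for
`ε ∈ (0,1/2)`) with respect to admissible sets: if the derivative of `NW_{n,ε}` with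
respect to an admissible set `D` (given by distinct rows `row k` and columns `col k`,
`εn ≤ t ≤ n`) is the multilinear monomial `∏_{v ∈ V} X v`, and `V' ⊆ V`, then the
multilinear monomial `∏_{v ∈ V'} X v` is also the partial derivative of `NW_{n,ε}` with
respect to some admissible set `D'`. -/
theorem pderiv_NW_downward_closed
    (n : ℕ) (Fn : Type*) [Field Fn] [Fintype Fn] [DecidableEq Fn]
    (hcard : Fintype.card Fn = n)
    (K : Type*) [Field K]
    (ε : ℝ) (hε : ε ∈ Set.Ioo (0 : ℝ) (1 / 2))
    (t : ℕ) (hεt : ε * n ≤ (t : ℝ)) (htn : t ≤ n)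
    (row col : Fin t → Fn) (hrow : Function.Injective row)
    (V : Finset (Fn × Fn))
    (hV : pderivFinset (Finset.image (fun k => (row k, col k)) Finset.univ)
        (NW Fn K ⌈ε * n⌉₊) = ∏ v ∈ V, X v)
    (V' : Finset (Fn × Fn)) (hV' : V' ⊆ V) :
    ∃ (t' : ℕ) (row' col' : Fin t' → Fn), Function.Injective row' ∧
      ε * n ≤ (t' : ℝ) ∧ t' ≤ n ∧
      pderivFinset (Finset.image (fun k => (row' k, col' k)) Finset.univ)
          (NW Fn K ⌈ε * n⌉₊) = ∏ v ∈ V', X v := by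
  classical
  set d := ⌈ε * n⌉₊ with hd
  set Wa : (Fin d → Fn) → Finset (Fn × Fn) :=
    fun a => Finset.univ.image (fun i => (i, polyEval a i)) with hWa
  have hinj : ∀ a : Fin d → Fn, Function.Injective (fun i : Fn => (i, polyEval a i)) := by
    intro a i j hij
    exact congrArg Prod.fst hij
  have hWmem : ∀ (a : Fin d → Fn) (v : Fn × Fn), v ∈ Wa a ↔ polyEval a v.1 = v.2 := by
    intro a v
    simp only [hWa, Finset.mem_image, Finset.mem_univ, true_and]
    constructor
    · rintro ⟨i, rfl⟩; rfl
    · intro h; exact ⟨v.1, by rw [h]⟩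
  have hWcard : ∀ a : Fin d → Fn, (Wa a).card = n := by
    intro a
    rw [hWa]
    rw [Finset.card_image_of_injective _ (hinj a), Finset.card_univ, hcard]
  have hNW : NW Fn K d = ∑ a : Fin d → Fn, ∏ v ∈ Wa a, X v := by
    unfold NW
    refine Finset.sum_congr rfl fun a _ => ?_
    rw [hWa]
    rw [Finset.prod_image fun i _ j _ hij => hinj a hij]
  have hderiv : ∀ D : Finset (Fn × Fn),
      pderivFinset D (NW Fn K d) =
        ∑ a : Fin d → Fn,
          if D ⊆ Wa a then ∏ v ∈ Wa a \ D, X v else (0 : MvPolynomial (Fn × Fn) K) := by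
    intro D
    rw [hNW, pderivFinset_sum]
    refine Finset.sum_congr rfl fun a _ => ?_
    rw [pderivFinset_prod_X]
  have hdt : d ≤ t := Nat.ceil_le.mpr hεt
  set D : Finset (Fn × Fn) := Finset.image (fun k => (row k, col k)) Finset.univ with hD
  have huniq : ∀ {a b : Fin d → Fn} {D' : Finset (Fn × Fn)},
      D ⊆ D' → D' ⊆ Wa a → D' ⊆ Wa b → a = b := by
    intro a b D' hDsub ha hb
    apply polyEval_injOn a b (Finset.univ.image row)
    · rw [Finset.card_image_of_injective _ hrow, Finset.card_univ, Fintype.card_fin]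
      exact hdt
    · intro x hx
      obtain ⟨k, -, rfl⟩ := Finset.mem_image.mp hx
      have hk : (row k, col k) ∈ D' :=
        hDsub (Finset.mem_image_of_mem _ (Finset.mem_univ k))
      have h1 := (hWmem a _).mp (ha hk)
      have h2 := (hWmem b _).mp (hb hk)
      rw [h1, h2]
  have hVne : (∏ v ∈ V, X v : MvPolynomial (Fn × Fn) K) ≠ 0 := by
    rw [prod_X_eq_monomial]
    simp [monomial_eq_zero]
  have hsum : (∑ a : Fin d → Fn,
      if D ⊆ Wa a then ∏ v ∈ Wa a \ D, X v else (0 : MvPolynomial (Fn × Fn) K))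
      = ∏ v ∈ V, X v := (hderiv D).symm.trans hV
  obtain ⟨a0, ha0⟩ : ∃ a : Fin d → Fn, D ⊆ Wa a := by
    by_contra hno
    push_neg at hno
    rw [Finset.sum_eq_zero (fun a _ => if_neg (hno a))] at hsum
    exact hVne hsum.symm
  have hsingle : ∀ D' : Finset (Fn × Fn), D ⊆ D' → D' ⊆ Wa a0 →
      pderivFinset D' (NW Fn K d) = ∏ v ∈ Wa a0 \ D', X v := by
    intro D' hDD' hsub
    rw [hderiv D', Finset.sum_eq_single a0]
    · rw [if_pos hsub]
    · intro b _ hb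
      rw [if_neg]
      intro hbsub
      exact hb (huniq hDD' hbsub hsub)
    · intro hk; exact absurd (Finset.mem_univ a0) hk
  have hVeq : Wa a0 \ D = V := by
    apply prod_X_inj (K := K)
    rw [← hsingle D Finset.Subset.rfl ha0]
    exact hV
  set D' : Finset (Fn × Fn) := D ∪ (V \ V') with hD'
  have hDD' : D ⊆ D' := Finset.subset_union_left
  have hsub' : D' ⊆ Wa a0 := by
    apply Finset.union_subset ha0
    intro v hv
    have := (Finset.mem_sdiff.mp hv).1
    rw [← hVeq] at this
    exact (Finset.mem_sdiff.mp this).1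
  have hWD' : Wa a0 \ D' = V' := by
    ext v
    have h1 : v ∈ V ↔ v ∈ Wa a0 ∧ v ∉ D := by rw [← hVeq, Finset.mem_sdiff]
    have h2 : v ∈ V' → v ∈ V := fun h => hV' h
    simp only [hD', Finset.mem_sdiff, Finset.mem_union]
    tauto
  have hfst : ∀ v ∈ D', ∀ w ∈ D', v.1 = w.1 → v = w := by
    intro v hv w hw hvw
    have h1 := (hWmem a0 v).mp (hsub' hv)
    have h2 := (hWmem a0 w).mp (hsub' hw)
    have : v.2 = w.2 := by rw [← h1, ← h2, hvw]
    exact Prod.ext hvw this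
  set t' := D'.card with ht'
  set e : Fin t' ≃ D' := D'.equivFin.symm with he
  refine ⟨t', fun k => (e k : Fn × Fn).1, fun k => (e k : Fn × Fn).2, ?_, ?_, ?_, ?_⟩
  · intro k l hkl
    apply e.injective
    apply Subtype.ext
    exact hfst _ (e k).2 _ (e l).2 hkl
  · have htt' : t ≤ t' := by
      have : D.card = t := by
        rw [hD, Finset.card_image_of_injective _
          (fun k l hkl => hrow (congrArg Prod.fst hkl)), Finset.card_univ, Fintype.card_fin]
      rw [← this]
      exact Finset.card_le_card hDD'
    exact hεt.trans (Nat.cast_le.mpr htt')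
  · have := Finset.card_le_card hsub'
    rwa [hWcard a0] at this
  · have himg : Finset.image (fun k => ((e k : Fn × Fn).1, (e k : Fn × Fn).2)) Finset.univ
        = D' := by
      ext v
      simp only [Finset.mem_image, Finset.mem_univ, true_and]
      constructor
      · rintro ⟨k, rfl⟩
        exact (e k).2
      · intro hv
        exact ⟨e.symm ⟨v, hv⟩, by simp⟩
    rw [himg, hsingle D' hDD' hsub', hWD']
end
end

section
/- Let n = 2m and let q be a prime power. The F_q-linear span, inside the space of all functions F_q^{n³} → F_q, of the evaluation functions of the monomials { m_S : S admissible } has dimension exactly n^{n−1}. Consequently, the F_q-linear span of the evaluation functions of the partial derivatives of IMM_{n,n} (with coefficients in F_q) has dimension at least n^{n−1}. -/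
open MvPolynomial

noncomputable section

/-- The iterated matrix multiplication polynomial `IMM_{n,n}`. -/
def IMM (n : ℕ) (K : Type*) [CommSemiring K] : MvPolynomial (Fin n × Fin n × Fin n) K :=
  if h : 0 < n then
    (((List.finRange n).map fun k =>
      Matrix.of fun i j => (X (k, i, j) : MvPolynomial (Fin n × Fin n × Fin n) K)).prod)
      ⟨0, h⟩ ⟨0, h⟩
  else 0

/-- Iterated partial derivative with respect to a list of variables (arbitrary
multi-indices correspond to such lists). -/
def pderivList {σ : Type*} {K : Type*} [CommSemiring K] (l : List σ)
    (f : MvPolynomial σ K) : MvPolynomial σ K :=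
  l.foldr (fun v g => pderiv v g) f

/-- A set `S` of variables of `IMM_{n,n}` is admissible if it consists of exactly one
variable from the first row of the first matrix and exactly one variable from each of
the other odd-indexed (`1`-based, even `0`-based) matrices. -/
def IsAdmissible (n : ℕ) (S : Finset (Fin n × Fin n × Fin n)) : Prop :=
  (∀ v ∈ S, Even v.1.val) ∧
  (∀ k : Fin n, Even k.val → (S.filter fun v => v.1 = k).card = 1) ∧
  (∀ v ∈ S, v.1.val = 0 → v.2.1.val = 0)

open Finset

section Aux



variable {R : Type*} [CommSemiring R]

theorem ofFn_prod_entry' {n : ℕ} (N : ℕ) (M : Fin N → Matrix (Fin n) (Fin n) R)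
    (i j : Fin n) :
    (List.ofFn M).prod i j = ∑ p : Fin (N + 1) → Fin n,
      (if p 0 = i then 1 else 0) *
      (∏ k : Fin N, M k (p k.castSucc) (p k.succ)) *
      (if p (Fin.last N) = j then 1 else 0) := by
  induction N generalizing i j with
  | zero =>
    have h1 : (∑ p : Fin (0 + 1) → Fin n,
        (if p 0 = i then (1:R) else 0) *
        (∏ k : Fin 0, M k (p k.castSucc) (p k.succ)) *
        (if p (Fin.last 0) = j then 1 else 0))
        = ∑ t : Fin n, (if t = i then (1:R) else 0) * 1 * (if t = j then 1 else 0) :=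
      (Equiv.sum_comp (Equiv.funUnique (Fin 1) (Fin n)).symm _).symm
    rw [h1]
    simp only [List.ofFn_zero, List.prod_nil, Matrix.one_apply, mul_one, ite_mul, one_mul,
      zero_mul, Finset.sum_ite_eq, Finset.mem_univ, if_true]
    by_cases h : i = j <;> simp [h, eq_comm]
  | succ N ih =>
    rw [List.ofFn_succ, List.prod_cons, Matrix.mul_apply]
    have h1 : (∑ p : Fin (N + 1 + 1) → Fin n,
        (if p 0 = i then (1:R) else 0) *
        (∏ k : Fin (N+1), M k (p k.castSucc) (p k.succ)) *
        (if p (Fin.last (N+1)) = j then 1 else 0))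
        = ∑ tq : Fin n × (Fin (N + 1) → Fin n),
        (if (Fin.cons tq.1 tq.2 : Fin (N+2) → Fin n) 0 = i then (1:R) else 0) *
        (∏ k : Fin (N+1), M k ((Fin.cons tq.1 tq.2 : Fin (N+2) → Fin n) k.castSucc)
          ((Fin.cons tq.1 tq.2 : Fin (N+2) → Fin n) k.succ)) *
        (if (Fin.cons tq.1 tq.2 : Fin (N+2) → Fin n) (Fin.last (N+1)) = j then 1 else 0) :=
      ((Fin.consEquiv (fun _ : Fin (N+2) => Fin n)).sum_comp _).symm
    rw [h1, Fintype.sum_prod_type]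
    simp only [Fin.prod_univ_succ, Fin.castSucc_zero, Fin.cons_zero, ← Fin.succ_castSucc,
      Fin.cons_succ, ← Fin.succ_last]
    simp only [ih, Finset.mul_sum]
    have hcomm : ∑ t : Fin n, ∑ q : Fin (N + 1) → Fin n,
          M 0 i t *
            (((if q 0 = t then (1:R) else 0) * ∏ k : Fin N, M k.succ (q k.castSucc) (q k.succ)) *
              if q (Fin.last N) = j then 1 else 0)
        = ∑ q : Fin (N + 1) → Fin n, ∑ t : Fin n,
          M 0 i t *
            (((if q 0 = t then (1:R) else 0) * ∏ k : Fin N, M k.succ (q k.castSucc) (q k.succ)) *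
              if q (Fin.last N) = j then 1 else 0) := by rw [Finset.sum_comm]
    refine hcomm.trans ?_
    have hR : (∑ t : Fin n, ∑ q : Fin (N + 1) → Fin n,
        (if t = i then (1:R) else 0) * (M 0 t (q 0) * ∏ k : Fin N, M k.succ (q k.castSucc) (q k.succ)) *
          (if q (Fin.last N) = j then 1 else 0))
        = ∑ q : Fin (N + 1) → Fin n,
          (M 0 i (q 0) * ∏ k : Fin N, M k.succ (q k.castSucc) (q k.succ)) *
          (if q (Fin.last N) = j then 1 else 0) := by
      rw [Finset.sum_eq_single_of_mem i (Finset.mem_univ i)]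
      · simp
      · intro b _ hb
        simp [hb]
    rw [hR]
    refine Finset.sum_congr rfl fun q _ => ?_
    rw [Finset.sum_eq_single_of_mem (q 0) (Finset.mem_univ _)]
    · simp only [eq_self_iff_true, if_true]
      ring
    · intro b _ hb
      simp [if_neg (Ne.symm hb)]


section P2
variable {R : Type*} [CommSemiring R] {σ : Type*} [DecidableEq σ]



theorem prod_monomial_one' {ι : Type*} (s : Finset ι) (f : ι → (σ →₀ ℕ)) :
    (∏ k ∈ s, (monomial (f k) (1:R))) = monomial (∑ k ∈ s, f k) 1 := by
  classical
  induction s using Finset.induction with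
  | empty => simp [monomial_zero']
  | insert _ _ hx ih =>
    rw [Finset.prod_insert hx, Finset.sum_insert hx, ih, monomial_mul, mul_one]

theorem pderivList_sum' {ι : Type*} (l : List σ) (s : Finset ι) (f : ι → MvPolynomial σ R) :
    pderivList l (∑ i ∈ s, f i) = ∑ i ∈ s, pderivList l (f i) := by
  induction l with
  | nil => rfl
  | cons v t ih =>
    show pderiv v (pderivList t _) = _
    rw [ih, map_sum]
    rfl

theorem pderivList_monomial_sq' {l : List σ} (hl : l.Nodup) (d : σ →₀ ℕ) (hd : ∀ v, d v ≤ 1) :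
    pderivList l (monomial d (1:R)) =
      if ∀ v ∈ l, d v = 1 then
        monomial (d - ∑ v ∈ l.toFinset, Finsupp.single v 1) 1 else 0 := by
  induction l with
  | nil => simp [pderivList]
  | cons v t ih =>
    have hvt : v ∉ t := (List.nodup_cons.mp hl).1
    have ht : t.Nodup := (List.nodup_cons.mp hl).2
    show pderiv v (pderivList t _) = _
    rw [ih ht]
    by_cases hall : ∀ w ∈ t, d w = 1
    · rw [if_pos hall]
      rw [pderiv_monomial]
      have hsub : ((d - ∑ w ∈ t.toFinset, Finsupp.single w 1 : σ →₀ ℕ)) v = d v := by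
        rw [Finsupp.tsub_apply, Finsupp.finset_sum_apply]
        have : ∀ w ∈ t.toFinset, (Finsupp.single w (1:ℕ)) v = 0 := by
          intro w hw
          exact Finsupp.single_eq_of_ne (fun h => hvt (h ▸ List.mem_toFinset.mp hw))
        rw [Finset.sum_eq_zero this]
        simp
      rw [hsub]
      by_cases hv : d v = 1
      · have hcond : ∀ w ∈ (v :: t), d w = 1 := by
          intro w hw
          rcases List.mem_cons.mp hw with h | h
          · exact h ▸ hv
          · exact hall w h
        rw [if_pos hcond, hv]
        simp only [Nat.cast_one, mul_one]
        congr 1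
        rw [List.toFinset_cons, Finset.sum_insert (fun h => hvt (List.mem_toFinset.mp h))]
        rw [tsub_tsub, add_comm]
      · have h0 : d v = 0 := by have := hd v; omega
        rw [h0]
        simp only [Nat.cast_zero, mul_zero, monomial_zero]
        rw [if_neg]
        intro h
        exact hv (h v List.mem_cons_self)
    · rw [if_neg hall, map_zero, if_neg (fun h => hall fun w hw => h w (List.mem_cons_of_mem v hw))]

end P2



/-- Products of distinct sets of coordinates are linearly independent as functions. -/
theorem chi_linearIndependent' (K : Type*) [Field K] (σ : Type*) [DecidableEq σ] :
    LinearIndependent K (fun T : Finset σ => fun x : σ → K => ∏ v ∈ T, x v) := by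
  rw [linearIndependent_iff']
  intro s c hsum
  suffices H : ∀ N : ℕ, ∀ T ∈ s, T.card = N → c T = 0 by
    intro T hT; exact H T.card T hT rfl
  intro N
  induction N using Nat.strong_induction_on with
  | _ N IH =>
    intro T hT hcard
    have hx := congrFun hsum (fun v => if v ∈ T then (1:K) else 0)
    simp only [Finset.sum_apply, Pi.smul_apply, smul_eq_mul, Pi.zero_apply] at hx
    have hprod : ∀ T' : Finset σ, (∏ v ∈ T', if v ∈ T then (1:K) else 0)
        = if T' ⊆ T then 1 else 0 := by
      intro T'
      by_cases h : T' ⊆ T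
      · rw [if_pos h, Finset.prod_congr rfl (fun v hv => if_pos (h hv)), Finset.prod_const_one]
      · rw [if_neg h]
        obtain ⟨w, hw, hwt⟩ := Finset.not_subset.mp h
        exact Finset.prod_eq_zero hw (if_neg hwt)
    simp only [hprod, mul_ite, mul_one, mul_zero] at hx
    have h2 : (∑ T' ∈ s, if T' ⊆ T then c T' else 0) = (if T ⊆ T then c T else 0) := by
      apply Finset.sum_eq_single_of_mem T hT
      intro T' hT' hne
      by_cases hsub : T' ⊆ T
      · rw [if_pos hsub]
        refine IH T'.card ?_ T' hT' rfl
        rw [← hcard]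
        exact Finset.card_lt_card (Finset.ssubset_iff_subset_ne.mpr ⟨hsub, hne⟩)
      · exact if_neg hsub
    rw [h2, if_pos (Finset.Subset.refl T)] at hx
    exact hx

theorem sum_single_one_apply_mem' {σ : Type*} [DecidableEq σ] {M : Type*} [Fintype M]
    [DecidableEq M] (w : M → σ) (hw : Function.Injective w) (j : M) :
    (∑ k : M, Finsupp.single (w k) (1:ℕ)) (w j) = 1 := by
  rw [Finsupp.finset_sum_apply]
  rw [Finset.sum_eq_single_of_mem j (Finset.mem_univ j)]
  · simp
  · intro k _ hk
    exact Finsupp.single_eq_of_ne' (fun h => hk (hw h))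

theorem sum_single_one_apply_notmem' {σ : Type*} [DecidableEq σ] {M : Type*} [Fintype M]
    (w : M → σ) {v : σ} (hv : ∀ k, w k ≠ v) :
    (∑ k : M, Finsupp.single (w k) (1:ℕ)) v = 0 := by
  rw [Finsupp.finset_sum_apply]
  exact Finset.sum_eq_zero fun k _ => Finsupp.single_eq_of_ne' (hv k)

theorem sum_single_one_support' {σ : Type*} [DecidableEq σ] {M : Type*} [Fintype M]
    [DecidableEq M] (w : M → σ) (hw : Function.Injective w) :
    (∑ k : M, Finsupp.single (w k) (1:ℕ)).support = Finset.image w Finset.univ := by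
  ext v
  rw [Finsupp.mem_support_iff, Finset.mem_image]
  constructor
  · intro h
    by_contra hc
    push_neg at hc
    exact h (sum_single_one_apply_notmem' w (fun k => hc k (Finset.mem_univ k)))
  · rintro ⟨k, _, rfl⟩
    rw [sum_single_one_apply_mem' w hw k]
    exact one_ne_zero


variable {R : Type*} [CommSemiring R]

/-- even/odd interleaving equivalence -/
def evenOdd (M : ℕ) : Fin M ⊕ Fin M ≃ Fin (2 * M) where
  toFun := Sum.elim (fun j => ⟨2 * j.val, by have := j.isLt; omega⟩)
    (fun j => ⟨2 * j.val + 1, by have := j.isLt; omega⟩)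
  invFun k := if k.val % 2 = 0 then .inl ⟨k.val / 2, by have := k.isLt; omega⟩
    else .inr ⟨k.val / 2, by have := k.isLt; omega⟩
  left_inv := by
    rintro (j | j) <;> dsimp only [Sum.elim_inl, Sum.elim_inr]
    · rw [if_pos (by omega)]
      exact congrArg Sum.inl (Fin.ext (by show 2 * j.val / 2 = j.val; omega))
    · rw [if_neg (by omega)]
      exact congrArg Sum.inr (Fin.ext (by show (2 * j.val + 1) / 2 = j.val; omega))
  right_inv := by
    intro k
    dsimp only
    by_cases h : k.val % 2 = 0
    · rw [if_pos h, Sum.elim_inl]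
      exact Fin.ext (by show 2 * (k.val / 2) = k.val; omega)
    · rw [if_neg h, Sum.elim_inr]
      exact Fin.ext (by show 2 * (k.val / 2) + 1 = k.val; omega)

def Dvec {n : ℕ} (p : Fin (n + 1) → Fin n) : (Fin n × Fin n × Fin n) →₀ ℕ :=
  ∑ k : Fin n, Finsupp.single (k, p k.castSucc, p k.succ) 1

theorem Dvec_apply {n : ℕ} (p : Fin (n + 1) → Fin n) (k i j : Fin n) :
    Dvec p (k, i, j) = if p k.castSucc = i ∧ p k.succ = j then 1 else 0 := by
  rw [Dvec, Finsupp.finset_sum_apply]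
  rw [Finset.sum_eq_single_of_mem k (Finset.mem_univ k)]
  · rw [Finsupp.single_apply]
    simp only [Prod.mk.injEq, true_and]
  · intro b _ hb
    exact Finsupp.single_eq_of_ne' (fun h => hb (congrArg Prod.fst h))

theorem Dvec_le_one {n : ℕ} (p : Fin (n + 1) → Fin n) (v : Fin n × Fin n × Fin n) :
    Dvec p v ≤ 1 := by
  obtain ⟨k, i, j⟩ := v
  rw [Dvec_apply]
  split <;> omega

variable {R : Type*} [CommSemiring R]

theorem IMM_eq_sum (n : ℕ) (hn0 : 0 < n) :
    IMM n R = ∑ p ∈ Finset.univ.filter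
        (fun p : Fin (n + 1) → Fin n => p 0 = ⟨0, hn0⟩ ∧ p (Fin.last n) = ⟨0, hn0⟩),
      monomial (Dvec p) 1 := by
  rw [IMM, dif_pos hn0, ← List.ofFn_eq_map, ofFn_prod_entry', Finset.sum_filter]
  apply Finset.sum_congr rfl
  intro p _
  have hX : (∏ k : Fin n, (Matrix.of fun i j =>
        (X (k, i, j) : MvPolynomial (Fin n × Fin n × Fin n) R)) (p k.castSucc) (p k.succ))
      = monomial (Dvec p) 1 := by
    rw [Dvec, ← prod_monomial_one']
    apply Finset.prod_congr rfl
    intro k _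
    rw [Matrix.of_apply]
    rfl
  rw [hX]
  by_cases h1 : p 0 = ⟨0, hn0⟩ <;> by_cases h2 : p (Fin.last n) = ⟨0, hn0⟩ <;>
    simp [h1, h2]

/-! ### Admissible data -/

def GG (m' : ℕ) : Type :=
  {g : Fin (m' + 1) → Fin (2 * (m' + 1)) × Fin (2 * (m' + 1)) // (g 0).1.val = 0}

instance (m' : ℕ) : Fintype (GG m') := Subtype.fintype _

variable {m' : ℕ}

def sVar (g : GG m') (k : Fin (m' + 1)) : Fin (2*(m'+1)) × Fin (2*(m'+1)) × Fin (2*(m'+1)) :=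
  (⟨2 * k.val, by have := k.isLt; omega⟩, g.1 k)

def nxt (g : GG m') (k : Fin (m' + 1)) : Fin (2*(m'+1)) :=
  if h : k.val + 1 < m' + 1 then (g.1 ⟨k.val + 1, h⟩).1 else ⟨0, by omega⟩

def oVar (g : GG m') (k : Fin (m' + 1)) : Fin (2*(m'+1)) × Fin (2*(m'+1)) × Fin (2*(m'+1)) :=
  (⟨2 * k.val + 1, by have := k.isLt; omega⟩, (g.1 k).2, nxt g k)

def Sset (g : GG m') : Finset (Fin (2*(m'+1)) × Fin (2*(m'+1)) × Fin (2*(m'+1))) :=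
  Finset.image (sVar g) Finset.univ

def Evec (g : GG m') : (Fin (2*(m'+1)) × Fin (2*(m'+1)) × Fin (2*(m'+1))) →₀ ℕ :=
  ∑ k : Fin (m' + 1), Finsupp.single (oVar g k) 1

def Wvec (g : GG m') : (Fin (2*(m'+1)) × Fin (2*(m'+1)) × Fin (2*(m'+1))) →₀ ℕ :=
  ∑ k : Fin (m' + 1), Finsupp.single (sVar g k) 1

def Pp (g : GG m') : Fin (2*(m'+1) + 1) → Fin (2*(m'+1)) := fun t =>
  if h : t.val < 2*(m'+1) then
    (if t.val % 2 = 0 then (g.1 ⟨t.val / 2, by omega⟩).1 else (g.1 ⟨t.val / 2, by omega⟩).2)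
  else ⟨0, by omega⟩

theorem sVar_injective (g : GG m') : Function.Injective (sVar g) := by
  intro a b hab
  have := congrArg (fun v => v.1.val) hab
  simp only [sVar] at this
  exact Fin.ext (by omega)

theorem oVar_injective (g : GG m') : Function.Injective (oVar g) := by
  intro a b hab
  have := congrArg (fun v => v.1.val) hab
  simp only [oVar] at this
  exact Fin.ext (by omega)

theorem Pp_even (g : GG m') (t : Fin (2*(m'+1) + 1)) (k : Fin (m' + 1))
    (ht : t.val = 2 * k.val) : Pp g t = (g.1 k).1 := by
  have hk := k.isLt
  rw [Pp, dif_pos (by omega), if_pos (by omega)]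
  have hk2 : (⟨t.val / 2, by omega⟩ : Fin (m'+1)) = k := Fin.ext (show t.val / 2 = k.val by omega)
  rw [hk2]

theorem Pp_odd (g : GG m') (t : Fin (2*(m'+1) + 1)) (k : Fin (m' + 1))
    (ht : t.val = 2 * k.val + 1) : Pp g t = (g.1 k).2 := by
  have hk := k.isLt
  rw [Pp, dif_pos (by omega), if_neg (by omega)]
  have hk2 : (⟨t.val / 2, by omega⟩ : Fin (m'+1)) = k := Fin.ext (show t.val / 2 = k.val by omega)
  rw [hk2]

theorem Pp_end (g : GG m') (t : Fin (2*(m'+1) + 1)) (ht : t.val = 2*(m'+1)) :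
    Pp g t = ⟨0, by omega⟩ := by
  rw [Pp, dif_neg (by omega)]

theorem Pp_nxt (g : GG m') (t : Fin (2*(m'+1) + 1)) (k : Fin (m' + 1))
    (ht : t.val = 2 * k.val + 2) : Pp g t = nxt g k := by
  have hk := k.isLt
  by_cases h : k.val + 1 < m' + 1
  · rw [nxt, dif_pos h, Pp_even g t ⟨k.val + 1, h⟩ (by show t.val = 2*(k.val+1); omega)]
  · rw [nxt, dif_neg h, Pp_end g t (by omega)]

theorem Pp_start (g : GG m') : Pp g 0 = ⟨0, by omega⟩ := by
  rw [Pp_even g 0 0 (by simp)]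
  exact Fin.ext g.2

theorem Dvec_Pp (g : GG m') : Dvec (Pp g) = Wvec g + Evec g := by
  rw [Dvec]
  have hsplit := (Equiv.sum_comp (evenOdd (m' + 1))
    (fun k : Fin (2 * (m' + 1)) =>
      Finsupp.single (k, Pp g k.castSucc, Pp g k.succ) (1:ℕ))).symm
  rw [hsplit, Fintype.sum_sum_type]
  congr 1
  · rw [Wvec]
    apply Finset.sum_congr rfl
    intro j _
    have h1 : Pp g ((evenOdd (m'+1) (Sum.inl j)).castSucc) = (g.1 j).1 :=
      Pp_even g _ j (by simp [evenOdd])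
    have h2 : Pp g ((evenOdd (m'+1) (Sum.inl j)).succ) = (g.1 j).2 :=
      Pp_odd g _ j (by simp [evenOdd])
    rw [h1, h2]
    rfl
  · rw [Evec]
    apply Finset.sum_congr rfl
    intro j _
    have h1 : Pp g ((evenOdd (m'+1) (Sum.inr j)).castSucc) = (g.1 j).2 :=
      Pp_odd g _ j (by simp [evenOdd])
    have h2 : Pp g ((evenOdd (m'+1) (Sum.inr j)).succ) = nxt g j :=
      Pp_nxt g _ j (by simp [evenOdd])
    rw [h1, h2]
    rfl

theorem Pp_mem_filter (g : GG m') :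
    Pp g ∈ Finset.univ.filter (fun p : Fin (2*(m'+1) + 1) → Fin (2*(m'+1)) =>
      p 0 = ⟨0, by omega⟩ ∧ p (Fin.last (2*(m'+1))) = ⟨0, by omega⟩) := by
  rw [Finset.mem_filter]
  exact ⟨Finset.mem_univ _, Pp_start g, Pp_end g _ rfl⟩

theorem Dvec_Pp_sVar (g : GG m') (k : Fin (m' + 1)) : Dvec (Pp g) (sVar g k) = 1 := by
  have hk := k.isLt
  rw [sVar, show (g.1 k : Fin (2*(m'+1)) × Fin (2*(m'+1))) = ((g.1 k).1, (g.1 k).2) from rfl,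
    Dvec_apply, if_pos]
  constructor
  · exact Pp_even g _ k (by simp)
  · exact Pp_odd g _ k (by simp)

theorem path_unique (g : GG m') (p : Fin (2*(m'+1) + 1) → Fin (2*(m'+1)))
    (h0 : p 0 = ⟨0, by omega⟩) (hlast : p (Fin.last (2*(m'+1))) = ⟨0, by omega⟩)
    (hcond : ∀ v ∈ Sset g, Dvec p v = 1) : p = Pp g := by
  have key : ∀ k : Fin (m' + 1),
      p (⟨2 * k.val, by have := k.isLt; omega⟩ : Fin (2*(m'+1))).castSucc = (g.1 k).1 ∧
      p (⟨2 * k.val, by have := k.isLt; omega⟩ : Fin (2*(m'+1))).succ = (g.1 k).2 := by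
    intro k
    have hv : sVar g k ∈ Sset g := Finset.mem_image_of_mem _ (Finset.mem_univ k)
    have := hcond _ hv
    rw [sVar, show (g.1 k : Fin (2*(m'+1)) × Fin (2*(m'+1))) = ((g.1 k).1, (g.1 k).2) from rfl,
      Dvec_apply] at this
    by_contra hc
    rw [if_neg hc] at this
    exact zero_ne_one this
  funext t
  by_cases ht : t.val < 2*(m'+1)
  · by_cases he : t.val % 2 = 0
    · obtain ⟨j, hj⟩ : ∃ j : Fin (m' + 1), t.val = 2 * j.val :=
        ⟨⟨t.val / 2, by omega⟩, show t.val = 2 * (t.val / 2) by omega⟩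
      have h1 : t = (⟨2 * j.val, by have := j.isLt; omega⟩ : Fin (2*(m'+1))).castSucc :=
        Fin.ext (by simpa using hj)
      rw [h1, (key j).1, Pp_even g _ j (by simp)]
    · obtain ⟨j, hj⟩ : ∃ j : Fin (m' + 1), t.val = 2 * j.val + 1 :=
        ⟨⟨t.val / 2, by omega⟩, show t.val = 2 * (t.val / 2) + 1 by omega⟩
      have h1 : t = (⟨2 * j.val, by have := j.isLt; omega⟩ : Fin (2*(m'+1))).succ :=
        Fin.ext (by simpa using hj)
      rw [h1, (key j).2, Pp_odd g _ j (by simp)]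
  · have h1 : t = Fin.last (2*(m'+1)) :=
      Fin.ext (by have := t.isLt; show t.val = 2*(m'+1); omega)
    rw [h1, hlast, Pp_end g _ rfl]

theorem pderiv_IMM_Sset (g : GG m') :
    pderivFinset (Sset g) (IMM (2*(m'+1)) R) = monomial (Evec g) 1 := by
  have hps : pderivFinset (Sset g) (IMM (2*(m'+1)) R)
      = pderivList (Sset g).toList (IMM (2*(m'+1)) R) := rfl
  rw [hps, IMM_eq_sum (2*(m'+1)) (by omega), pderivList_sum']
  have hterm : ∀ p : Fin (2*(m'+1) + 1) → Fin (2*(m'+1)),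
      pderivList (Sset g).toList (monomial (Dvec p) (1:R))
      = if ∀ v ∈ Sset g, Dvec p v = 1 then
          monomial (Dvec p - ∑ v ∈ Sset g, Finsupp.single v 1) 1 else 0 := by
    intro p
    rw [pderivList_monomial_sq' (Finset.nodup_toList _) _ (Dvec_le_one p)]
    have h1 : (∀ v ∈ (Sset g).toList, Dvec p v = 1) ↔ (∀ v ∈ Sset g, Dvec p v = 1) := by
      constructor <;> intro h v hv
      · exact h v (Finset.mem_toList.mpr hv)
      · exact h v (Finset.mem_toList.mp hv)
    rw [Finset.toList_toFinset]
    by_cases h : ∀ v ∈ Sset g, Dvec p v = 1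
    · rw [if_pos (h1.mpr h), if_pos h]
    · rw [if_neg (fun hh => h (h1.mp hh)), if_neg h]
  have hW : (∑ v ∈ Sset g, Finsupp.single v (1:ℕ)) = Wvec g := by
    rw [Sset, Finset.sum_image (fun a _ b _ h => sVar_injective g h), Wvec]
  rw [Finset.sum_congr rfl (fun p _ => hterm p)]
  rw [Finset.sum_eq_single_of_mem (Pp g) (Pp_mem_filter g)]
  · rw [if_pos (fun v hv => ?_), hW, Dvec_Pp, add_tsub_cancel_left]
    obtain ⟨k, _, rfl⟩ := Finset.mem_image.mp hv
    exact Dvec_Pp_sVar g k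
  · intro p hp hne
    rw [Finset.mem_filter] at hp
    rw [if_neg]
    intro hcond
    exact hne (path_unique g p hp.2.1 hp.2.2 hcond)

theorem filter_Sset (g : GG m') (k : Fin (2*(m'+1))) (j : Fin (m'+1))
    (hj : k.val = 2 * j.val) :
    (Sset g).filter (fun v => v.1 = k) = {sVar g j} := by
  ext v
  rw [Finset.mem_filter, Finset.mem_singleton, Sset]
  constructor
  · rintro ⟨hv, hv1⟩
    obtain ⟨a, _, rfl⟩ := Finset.mem_image.mp hv
    have : 2 * a.val = k.val := congrArg Fin.val hv1
    have haj : a = j := Fin.ext (by omega)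
    rw [haj]
  · rintro rfl
    refine ⟨Finset.mem_image_of_mem _ (Finset.mem_univ j), Fin.ext (by show 2*j.val = k.val; omega)⟩

theorem isAdmissible_Sset (g : GG m') : IsAdmissible (2*(m'+1)) (Sset g) := by
  refine ⟨?_, ?_, ?_⟩
  · intro v hv
    obtain ⟨a, _, rfl⟩ := Finset.mem_image.mp hv
    exact ⟨a.val, by show 2*a.val = a.val + a.val; omega⟩
  · intro k hk
    obtain ⟨c, hc⟩ := hk
    have hj : k.val = 2 * ((⟨c, by omega⟩ : Fin (m'+1)) : Fin (m'+1)).val := by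
      show k.val = 2 * c; omega
    rw [filter_Sset g k _ hj, Finset.card_singleton]
  · intro v hv h0
    obtain ⟨a, _, rfl⟩ := Finset.mem_image.mp hv
    have ha : a.val = 0 := by
      have : 2 * a.val = 0 := h0
      omega
    have ha0 : a = 0 := Fin.ext ha
    show (g.1 a).1.val = 0
    rw [ha0]
    exact g.2

theorem isAdmissible_iff_Sset (S : Finset (Fin (2*(m'+1)) × Fin (2*(m'+1)) × Fin (2*(m'+1)))) :
    IsAdmissible (2*(m'+1)) S ↔ ∃ g : GG m', S = Sset g := by
  constructor
  · rintro ⟨h1, h2, h3⟩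
    -- extract uniquely determined elements
    have hchoice : ∀ j : Fin (m'+1), ∃ v, S.filter
        (fun v => v.1 = (⟨2*j.val, by have := j.isLt; omega⟩ : Fin (2*(m'+1)))) = {v} := by
      intro j
      apply Finset.card_eq_one.mp
      exact h2 _ ⟨j.val, show 2*j.val = j.val + j.val by omega⟩
    choose u hu using hchoice
    have humem : ∀ j, u j ∈ S ∧ (u j).1 = ⟨2*j.val, by have := j.isLt; omega⟩ := by
      intro j
      have : u j ∈ S.filter _ := (hu j).symm ▸ Finset.mem_singleton_self (u j)
      exact Finset.mem_filter.mp this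
    have hg0 : ((u 0).2).1.val = 0 := by
      apply h3 _ (humem 0).1
      rw [(humem 0).2]
      show 2 * (0 : Fin (m'+1)).val = 0
      simp
    refine ⟨⟨fun j => (u j).2, hg0⟩, ?_⟩
    ext v
    show _ ↔ v ∈ Finset.image (sVar _) Finset.univ
    rw [Finset.mem_image]
    constructor
    · intro hv
      obtain ⟨c, hc⟩ := h1 v hv
      have hlt : c < m' + 1 := by have := v.1.isLt; omega
      refine ⟨⟨c, hlt⟩, Finset.mem_univ _, ?_⟩
      have hvmem : v ∈ S.filter
          (fun w => w.1 = (⟨2*(⟨c, hlt⟩ : Fin (m'+1)).val, by omega⟩ : Fin (2*(m'+1)))) := by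
        rw [Finset.mem_filter]
        exact ⟨hv, Fin.ext (by show v.1.val = 2*c; omega)⟩
      rw [hu ⟨c, hlt⟩, Finset.mem_singleton] at hvmem
      rw [hvmem]
      refine Prod.ext ?_ rfl
      show (⟨2 * (⟨c, hlt⟩ : Fin (m'+1)).val, by omega⟩ : Fin (2*(m'+1))) = (u ⟨c, hlt⟩).1
      rw [(humem ⟨c, hlt⟩).2]
    · rintro ⟨j, _, rfl⟩
      have : sVar ⟨fun j => (u j).2, hg0⟩ j = u j := by
        show ((⟨2 * j.val, by have := j.isLt; omega⟩ : Fin (2*(m'+1))), (u j).2) = u j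
        rw [show u j = ((u j).1, (u j).2) from rfl, (humem j).2]
      rw [this]
      exact (humem j).1
  · rintro ⟨g, rfl⟩
    exact isAdmissible_Sset g

theorem oVar_eq_of (g g' : GG m') (h : Finset.image (oVar g) Finset.univ
    = Finset.image (oVar g') Finset.univ) : ∀ j, oVar g j = oVar g' j := by
  intro j
  have hmem : oVar g j ∈ Finset.image (oVar g') Finset.univ := by
    rw [← h]
    exact Finset.mem_image_of_mem _ (Finset.mem_univ j)
  obtain ⟨j', _, hj'⟩ := Finset.mem_image.mp hmem
  have hfst : 2 * j'.val + 1 = 2 * j.val + 1 := congrArg (fun v => v.1.val) hj'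
  have hj'j : j' = j := Fin.ext (by omega)
  subst hj'j
  exact hj'.symm

theorem nxt_castSucc (g : GG m') (j : Fin m') : nxt g j.castSucc = (g.1 j.succ).1 := by
  rw [nxt, dif_pos (by have := j.isLt; simp only [Fin.coe_castSucc]; omega)]
  have hidx : (⟨j.castSucc.val + 1, by have := j.isLt; simp only [Fin.coe_castSucc]; omega⟩ : Fin (m'+1)) = j.succ :=
    Fin.ext (by simp)
  rw [hidx]

theorem Esupp_injective :
    Function.Injective (fun g : GG m' => Finset.image (oVar g) Finset.univ) := by
  intro g g' h
  have hov := oVar_eq_of g g' h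
  have hsnd : ∀ k, (g.1 k).2 = (g'.1 k).2 :=
    fun k => congrArg (fun v => v.2.1) (hov k)
  have hnxt : ∀ k, nxt g k = nxt g' k :=
    fun k => congrArg (fun v => v.2.2) (hov k)
  have hfst : ∀ k, (g.1 k).1 = (g'.1 k).1 := by
    intro k
    induction k using Fin.cases with
    | zero => exact Fin.ext (g.2.trans g'.2.symm)
    | succ j =>
      have := hnxt j.castSucc
      rwa [nxt_castSucc g j, nxt_castSucc g' j] at this
  apply Subtype.ext
  funext k
  exact Prod.ext (hfst k) (hsnd k)

def GGEquiv (m' : ℕ) : GG m' ≃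
    Fin (2*(m'+1)) × (Fin m' → Fin (2*(m'+1)) × Fin (2*(m'+1))) where
  toFun g := ((g.1 0).2, fun k => g.1 k.succ)
  invFun x := ⟨Fin.cons (⟨0, by omega⟩, x.1) x.2, by simp⟩
  left_inv g := by
    apply Subtype.ext
    funext k
    dsimp only
    induction k using Fin.cases with
    | zero =>
      rw [Fin.cons_zero]
      exact Prod.ext (Fin.ext g.2.symm) rfl
    | succ j => rw [Fin.cons_succ]
  right_inv x := by
    dsimp only
    refine Prod.ext ?_ ?_
    · rw [Fin.cons_zero]
    · funext k
      dsimp only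
      rw [Fin.cons_succ]

theorem card_GG (m' : ℕ) : Fintype.card (GG m') = (2*(m'+1))^(2*(m'+1)-1) := by
  rw [Fintype.card_congr (GGEquiv m'), Fintype.card_prod, Fintype.card_fun,
    Fintype.card_prod, Fintype.card_fin, Fintype.card_fin]
  have h1 : 2*(m'+1) - 1 = 2*m' + 1 := by omega
  rw [h1]
  have : (2*(m'+1)) * (2*(m'+1)) = (2*(m'+1))^2 := (sq _).symm
  rw [this, ← pow_mul, ← pow_succ']

theorem Evec_support (g : GG m') :
    (Evec g).support = Finset.image (oVar g) Finset.univ :=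
  sum_single_one_support' _ (oVar_injective g)

theorem eval_monomial_Evec {Fq : Type*} [CommSemiring Fq] (g : GG m')
    (x : Fin (2*(m'+1)) × Fin (2*(m'+1)) × Fin (2*(m'+1)) → Fq) :
    eval x (monomial (Evec g) (1:Fq)) = ∏ w ∈ Finset.image (oVar g) Finset.univ, x w := by
  rw [eval_monomial, one_mul, Finsupp.prod, Evec_support]
  apply Finset.prod_congr rfl
  intro w hw
  obtain ⟨k, _, rfl⟩ := Finset.mem_image.mp hw
  rw [show Evec g (oVar g k) = 1 from sum_single_one_apply_mem' _ (oVar_injective g) k, pow_one]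

theorem main_thm (m' : ℕ) (Fq : Type*) [Field Fq] [Fintype Fq] :
    Module.finrank Fq ↥(Submodule.span Fq
      {g : (Fin (2*(m'+1)) × Fin (2*(m'+1)) × Fin (2*(m'+1)) → Fq) → Fq |
        ∃ S : Finset (Fin (2*(m'+1)) × Fin (2*(m'+1)) × Fin (2*(m'+1))),
        IsAdmissible (2*(m'+1)) S ∧ g = fun x => MvPolynomial.eval x (pderivFinset S (IMM (2*(m'+1)) Fq))})
      = (2*(m'+1)) ^ (2*(m'+1) - 1) ∧
    (2*(m'+1)) ^ (2*(m'+1) - 1) ≤ Module.finrank Fq ↥(Submodule.span Fq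
      {g : (Fin (2*(m'+1)) × Fin (2*(m'+1)) × Fin (2*(m'+1)) → Fq) → Fq |
        ∃ l : List (Fin (2*(m'+1)) × Fin (2*(m'+1)) × Fin (2*(m'+1))),
        g = fun x => MvPolynomial.eval x (pderivList l (IMM (2*(m'+1)) Fq))}) := by
  set σ3 := Fin (2*(m'+1)) × Fin (2*(m'+1)) × Fin (2*(m'+1))
  set v : GG m' → ((σ3 → Fq) → Fq) :=
    fun g => fun x => ∏ w ∈ Finset.image (oVar g) Finset.univ, x w with hv
  have hAv : {g : (σ3 → Fq) → Fq | ∃ S : Finset σ3,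
      IsAdmissible (2*(m'+1)) S ∧ g = fun x => MvPolynomial.eval x (pderivFinset S (IMM (2*(m'+1)) Fq))}
      = Set.range v := by
    ext f
    constructor
    · rintro ⟨S, hadm, rfl⟩
      obtain ⟨g, rfl⟩ := (isAdmissible_iff_Sset S).mp hadm
      refine ⟨g, ?_⟩
      funext x
      rw [hv]
      dsimp only
      rw [← eval_monomial_Evec g x, pderiv_IMM_Sset]
    · rintro ⟨g, rfl⟩
      refine ⟨Sset g, isAdmissible_Sset g, ?_⟩
      funext x
      rw [hv]
      dsimp only
      rw [pderiv_IMM_Sset, eval_monomial_Evec g x]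
  have hli : LinearIndependent Fq v :=
    (chi_linearIndependent' Fq σ3).comp _ Esupp_injective
  have hrank : Module.finrank Fq ↥(Submodule.span Fq (Set.range v))
      = (2*(m'+1)) ^ (2*(m'+1) - 1) := by
    rw [finrank_span_eq_card hli, card_GG]
  refine ⟨by rw [hAv, hrank], ?_⟩
  rw [hAv] at *
  have hsub : Submodule.span Fq (Set.range v) ≤ Submodule.span Fq
      {g : (σ3 → Fq) → Fq | ∃ l : List σ3,
        g = fun x => MvPolynomial.eval x (pderivList l (IMM (2*(m'+1)) Fq))} := by
    apply Submodule.span_mono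
    rintro f ⟨g, rfl⟩
    refine ⟨(Sset g).toList, ?_⟩
    funext x
    rw [hv]
    dsimp only
    rw [show pderivList (Sset g).toList (IMM (2*(m'+1)) Fq)
        = pderivFinset (Sset g) (IMM (2*(m'+1)) Fq) from rfl,
      pderiv_IMM_Sset, eval_monomial_Evec g x]
  calc (2*(m'+1)) ^ (2*(m'+1) - 1) = Module.finrank Fq ↥(Submodule.span Fq (Set.range v)) :=
        hrank.symm
    _ ≤ _ := Submodule.finrank_mono hsub


end Aux

/-- For `n = 2m`, the `F_q`-span of the evaluation functions of the monomials
`m_S = ∂IMM_{n,n}/∂S`, over admissible sets `S`, has dimension exactly `n^(n−1)`;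
consequently the `F_q`-span of the evaluation functions of all partial derivatives of
`IMM_{n,n}` (over `F_q`) has dimension at least `n^(n−1)`. -/
theorem IMM_derivative_space_dimension
    (m : ℕ) (hm : 0 < m) (Fq : Type*) [Field Fq] [Fintype Fq] (n : ℕ) (hn : n = 2 * m) :
    Module.finrank Fq ↥(Submodule.span Fq
      {g : (Fin n × Fin n × Fin n → Fq) → Fq | ∃ S : Finset (Fin n × Fin n × Fin n),
        IsAdmissible n S ∧ g = fun x => MvPolynomial.eval x (pderivFinset S (IMM n Fq))})
      = n ^ (n - 1) ∧
    n ^ (n - 1) ≤ Module.finrank Fq ↥(Submodule.span Fq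
      {g : (Fin n × Fin n × Fin n → Fq) → Fq | ∃ l : List (Fin n × Fin n × Fin n),
        g = fun x => MvPolynomial.eval x (pderivList l (IMM n Fq))}) := by
  subst hn
  obtain ⟨m', rfl⟩ : ∃ m', m = m' + 1 := ⟨m - 1, by omega⟩
  exact main_thm m' Fq
end
end
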